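/- arXiv:0905.1145 — 2 statements merged into one kernel-verified Lean document; each statement's English description precedes it below -/
import Mathlib

section
/- Let A, B be nonempty compact subsets of ℝ^d, h ∈ ℝ^d, α ∈ A, β ∈ B, and Λ a translation-invariant locally finite measure on hyperplanes. Then |Λ([A | T_h B]) − Λ([α | β + h])| ≤ Λ([conv A]) + Λ([conv B]), where [A|B] is the set of hyperplanes strictly separating A and B, [K] the set of hyperplanes hitting K, and T_h B = B + h. -/
open MeasureTheory Filter
open scoped RealInnerProductSpace Topology Pointwise

/-- The space of (parametrized) affine hyperplanes of `ℝ^d`: a pair `(u, r)` of a unit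
vector and a real number corresponds to the hyperplane `{x : ⟨x,u⟩ = r}`. -/
abbrev HypSp (d : ℕ) := (Metric.sphere (0 : EuclideanSpace ℝ (Fin d)) 1) × ℝ

/-- The set of hyperplanes hitting a set `K`. -/
def hits {d : ℕ} (K : Set (EuclideanSpace ℝ (Fin d))) : Set (HypSp d) :=
  {p | ∃ x ∈ K, ⟪x, (p.1 : EuclideanSpace ℝ (Fin d))⟫ = p.2}

/-- The set of hyperplanes strictly separating the points `x` and `y`. -/
def sepPts {d : ℕ} (x y : EuclideanSpace ℝ (Fin d)) : Set (HypSp d) :=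
  {p | (⟪x, (p.1 : EuclideanSpace ℝ (Fin d))⟫ - p.2) *
        (⟪y, (p.1 : EuclideanSpace ℝ (Fin d))⟫ - p.2) < 0}

/-- The set of hyperplanes strictly separating the sets `A` and `B`. -/
def sepSets {d : ℕ} (A B : Set (EuclideanSpace ℝ (Fin d))) : Set (HypSp d) :=
  {p | ((∀ a ∈ A, ⟪a, (p.1 : EuclideanSpace ℝ (Fin d))⟫ < p.2) ∧
          ∀ b ∈ B, p.2 < ⟪b, (p.1 : EuclideanSpace ℝ (Fin d))⟫) ∨
       ((∀ b ∈ B, ⟪b, (p.1 : EuclideanSpace ℝ (Fin d))⟫ < p.2) ∧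
          ∀ a ∈ A, p.2 < ⟪a, (p.1 : EuclideanSpace ℝ (Fin d))⟫)}

/-- The action of the translation `T_h` on hyperplanes. -/
noncomputable def hypTrans {d : ℕ} (h : EuclideanSpace ℝ (Fin d)) (p : HypSp d) : HypSp d :=
  (p.1, p.2 + ⟪h, (p.1 : EuclideanSpace ℝ (Fin d))⟫)

/-- A measure on hyperplanes is translation invariant (stationary) if it is invariant
under every translation of `ℝ^d`. -/
def TransInvariant {d : ℕ} (Λ : Measure (HypSp d)) : Prop :=
  ∀ h : EuclideanSpace ℝ (Fin d), Measure.map (hypTrans h) Λ = Λ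

/-- A measure on hyperplanes is locally finite if the set of hyperplanes hitting any
compact set has finite measure. -/
def LocFiniteHyp {d : ℕ} (Λ : Measure (HypSp d)) : Prop :=
  ∀ K : Set (EuclideanSpace ℝ (Fin d)), IsCompact K → Λ (hits K) ≠ ⊤


section Aux

variable {d : ℕ}

lemma hit_of_mem_mem {K : Set (EuclideanSpace ℝ (Fin d))} {x y : EuclideanSpace ℝ (Fin d)}
    (hx : x ∈ K) (hy : y ∈ K) {u : Metric.sphere (0 : EuclideanSpace ℝ (Fin d)) 1} {r : ℝ}
    (h1 : ⟪x, (u : EuclideanSpace ℝ (Fin d))⟫ ≤ r)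
    (h2 : r ≤ ⟪y, (u : EuclideanSpace ℝ (Fin d))⟫) :
    ((u, r) : HypSp d) ∈ hits (convexHull ℝ K) := by
  set f : ℝ → ℝ := fun t => ⟪x + t • (y - x), (u : EuclideanSpace ℝ (Fin d))⟫ with hf
  have hcont : Continuous f := by
    have : f = fun t => ⟪x, (u : EuclideanSpace ℝ (Fin d))⟫
        + t * ⟪y - x, (u : EuclideanSpace ℝ (Fin d))⟫ := by
      funext t; simp only [hf]; rw [inner_add_left, real_inner_smul_left]
    rw [this]; fun_prop
  have hf0 : f 0 = ⟪x, (u : EuclideanSpace ℝ (Fin d))⟫ := by simp [hf]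
  have hf1 : f 1 = ⟪y, (u : EuclideanSpace ℝ (Fin d))⟫ := by simp [hf]
  have hsub := intermediate_value_Icc (zero_le_one (α := ℝ)) hcont.continuousOn
  have hr : r ∈ Set.Icc (f 0) (f 1) := by rw [hf0, hf1]; exact ⟨h1, h2⟩
  obtain ⟨t, ht, hft⟩ := hsub hr
  refine ⟨x + t • (y - x), segment_subset_convexHull hx hy ?_, hft⟩
  rw [segment_eq_image']
  exact ⟨t, ht, rfl⟩

/-- `hypTrans h` as a measurable equivalence. -/
noncomputable def hypTransEquiv (h : EuclideanSpace ℝ (Fin d)) : HypSp d ≃ᵐ HypSp d where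
  toFun := hypTrans h
  invFun := hypTrans (-h)
  left_inv p := by simp [hypTrans, inner_neg_left]
  right_inv p := by simp [hypTrans, inner_neg_left]
  measurable_toFun := by
    have : Continuous (hypTrans h) := by
      refine continuous_fst.prodMk (continuous_snd.add ?_)
      exact Continuous.inner continuous_const (continuous_subtype_val.comp continuous_fst)
    exact this.measurable
  measurable_invFun := by
    have : Continuous (hypTrans (-h)) := by
      refine continuous_fst.prodMk (continuous_snd.add ?_)
      exact Continuous.inner continuous_const (continuous_subtype_val.comp continuous_fst)
    exact this.measurable

end Aux

set_option maxHeartbeats 1000000 in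
/-- For nonempty compacts `A, B`, `h ∈ ℝ^d`, `α ∈ A`, `β ∈ B`, and a
translation-invariant locally finite hyperplane measure `Λ`:
`|Λ([A|T_h B]) − Λ([α|β+h])| ≤ Λ([conv A]) + Λ([conv B])`. -/
theorem stmt8 {d : ℕ} (Λ : Measure (HypSp d))
    (hinv : TransInvariant Λ) (hfin : LocFiniteHyp Λ)
    (A B : Set (EuclideanSpace ℝ (Fin d))) (hA : IsCompact A) (hB : IsCompact B)
    (hAne : A.Nonempty) (hBne : B.Nonempty)
    (h α β : EuclideanSpace ℝ (Fin d)) (hα : α ∈ A) (hβ : β ∈ B) :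
    |(Λ (sepSets A ((· + h) '' B))).toReal - (Λ (sepPts α (β + h))).toReal|
      ≤ (Λ (hits (convexHull ℝ A))).toReal + (Λ (hits (convexHull ℝ B))).toReal := by
  classical
  set B' : Set (EuclideanSpace ℝ (Fin d)) := (· + h) '' B with hB'
  have hβ' : β + h ∈ B' := ⟨β, hβ, rfl⟩
  -- separating hyperplanes for the sets separate the points
  have sub1 : sepSets A B' ⊆ sepPts α (β + h) := by
    rintro ⟨u, r⟩ (⟨h1, h2⟩ | ⟨h1, h2⟩)
    · exact mul_neg_of_neg_of_pos (sub_neg.2 (h1 α hα)) (sub_pos.2 (h2 _ hβ'))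
    · exact mul_neg_of_pos_of_neg (sub_pos.2 (h2 α hα)) (sub_neg.2 (h1 _ hβ'))
  have sub2 : sepPts α (β + h) ⊆
      sepSets A B' ∪ hits (convexHull ℝ A) ∪ hits (convexHull ℝ B') := by
    rintro ⟨u, r⟩ hp
    simp only [sepPts, Set.mem_setOf_eq] at hp
    by_cases cA : ((u, r) : HypSp d) ∈ hits (convexHull ℝ A)
    · exact Or.inl (Or.inr cA)
    by_cases cB : ((u, r) : HypSp d) ∈ hits (convexHull ℝ B')
    · exact Or.inr cB
    refine Or.inl (Or.inl ?_)
    rcases mul_neg_iff.1 hp with ⟨h1, h2⟩ | ⟨h1, h2⟩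
    · -- ⟪α⟫ > r and ⟪β+h⟫ < r
      refine Or.inr ⟨fun b hb => ?_, fun a ha => ?_⟩
      · by_contra hc
        push_neg at hc
        exact cB (hit_of_mem_mem hβ' hb (le_of_lt (sub_neg.1 h2)) hc)
      · by_contra hc
        push_neg at hc
        exact cA (hit_of_mem_mem ha hα hc (le_of_lt (sub_pos.1 h1)))
    · -- ⟪α⟫ < r and ⟪β+h⟫ > r
      refine Or.inl ⟨fun a ha => ?_, fun b hb => ?_⟩
      · by_contra hc
        push_neg at hc
        exact cA (hit_of_mem_mem hα ha (le_of_lt (sub_neg.1 h1)) hc)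
      · by_contra hc
        push_neg at hc
        exact cB (hit_of_mem_mem hb hβ' hc (le_of_lt (sub_pos.1 h2)))
  -- the points' separating hyperplanes hit a compact set, hence finite measure
  have finpts : Λ (sepPts α (β + h)) ≠ ⊤ := by
    refine ne_top_of_le_ne_top
      (hfin _ (((Set.finite_singleton (β + h)).insert α).isCompact_convexHull ℝ))
      (measure_mono ?_)
    rintro ⟨u, r⟩ hp
    simp only [sepPts, Set.mem_setOf_eq] at hp
    rcases mul_neg_iff.1 hp with ⟨h1, h2⟩ | ⟨h1, h2⟩
    · exact hit_of_mem_mem (K := {α, β + h}) (Set.mem_insert_of_mem _ rfl) (Set.mem_insert _ _)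
        (le_of_lt (sub_neg.1 h2)) (le_of_lt (sub_pos.1 h1))
    · exact hit_of_mem_mem (K := {α, β + h}) (Set.mem_insert _ _) (Set.mem_insert_of_mem _ rfl)
        (le_of_lt (sub_neg.1 h1)) (le_of_lt (sub_pos.1 h2))
  -- finiteness of the hull-hitting measures
  have finhull : ∀ K : Set (EuclideanSpace ℝ (Fin d)), IsCompact K → Λ (hits (convexHull ℝ K)) ≠ ⊤ := by
    intro K hK
    obtain ⟨R, hR⟩ := (isBounded_convexHull.2 hK.isBounded).subset_closedBall 0
    refine ne_top_of_le_ne_top (hfin _ (isCompact_closedBall 0 R)) (measure_mono ?_)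
    rintro p ⟨x, hx, hxe⟩
    exact ⟨x, hR hx, hxe⟩
  have finA : Λ (hits (convexHull ℝ A)) ≠ ⊤ := finhull A hA
  have finB : Λ (hits (convexHull ℝ B)) ≠ ⊤ := finhull B hB
  -- translation invariance: hitting measure of translated hull
  have key : Λ (hits (convexHull ℝ B')) = Λ (hits (convexHull ℝ B)) := by
    have himg : convexHull ℝ B' = convexHull ℝ B + ({h} : Set (EuclideanSpace ℝ (Fin d))) := by
      rw [hB', show (· + h) '' B = B + {h} from Set.add_singleton.symm,
        convexHull_add, convexHull_singleton]
    have hpre : hypTrans h ⁻¹' hits (convexHull ℝ B') = hits (convexHull ℝ B) := by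
      ext ⟨u, r⟩
      simp only [himg, hits, hypTrans, Set.mem_preimage, Set.mem_setOf_eq, Set.add_singleton,
        Set.mem_image, exists_exists_and_eq_and, inner_add_left, add_left_inj]
    calc Λ (hits (convexHull ℝ B')) = (Measure.map (hypTrans h) Λ) (hits (convexHull ℝ B')) := by
          rw [hinv h]
      _ = Λ (hypTrans h ⁻¹' hits (convexHull ℝ B')) :=
          MeasurableEquiv.map_apply (hypTransEquiv h) _
      _ = Λ (hits (convexHull ℝ B)) := by rw [hpre]
  -- measure inequalities
  have m1 : Λ (sepSets A B') ≤ Λ (sepPts α (β + h)) := measure_mono sub1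
  have m2 : Λ (sepPts α (β + h)) ≤
      Λ (sepSets A B') + Λ (hits (convexHull ℝ A)) + Λ (hits (convexHull ℝ B)) := by
    refine (measure_mono sub2).trans ?_
    calc Λ (sepSets A B' ∪ hits (convexHull ℝ A) ∪ hits (convexHull ℝ B'))
        ≤ Λ (sepSets A B' ∪ hits (convexHull ℝ A)) + Λ (hits (convexHull ℝ B')) :=
          measure_union_le _ _
      _ ≤ Λ (sepSets A B') + Λ (hits (convexHull ℝ A)) + Λ (hits (convexHull ℝ B)) := by
          rw [key]; exact add_le_add_left (measure_union_le _ _) _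
  have finS : Λ (sepSets A B') ≠ ⊤ := ne_top_of_le_ne_top finpts m1
  have hle : (Λ (sepSets A B')).toReal ≤ (Λ (sepPts α (β + h))).toReal :=
    ENNReal.toReal_mono finpts m1
  have hsum : (Λ (sepPts α (β + h))).toReal ≤ (Λ (sepSets A B')).toReal
      + (Λ (hits (convexHull ℝ A))).toReal + (Λ (hits (convexHull ℝ B))).toReal := by
    have := ENNReal.toReal_mono (by finiteness) m2
    rwa [ENNReal.toReal_add (by finiteness) finB, ENNReal.toReal_add finS finA] at this
  rw [abs_of_nonpos (sub_nonpos.2 hle), neg_sub]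
  linarith
end

section
/- With the same hypotheses, Λ([A | T_h B]) / Λ([conv(A ∪ T_h B)]) → 1 as ‖h‖ → ∞, i.e. Λ([W_h]) = Λ([A|T_h B])(1 + o(1)). -/
open MeasureTheory Filter
open scoped RealInnerProductSpace Topology

open scoped ENNReal

section Aux
variable {d : ℕ}

local notation "E" => EuclideanSpace ℝ (Fin d)

lemma cont_ip (x : E) : Continuous fun p : HypSp d => (⟪x, (p.1 : E)⟫ : ℝ) :=
  Continuous.inner continuous_const (continuous_subtype_val.comp continuous_fst)

lemma seg_hit {x y u : E} {r : ℝ} (hx : ⟪x, u⟫ ≤ r) (hy : r ≤ ⟪y, u⟫) :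
    ∃ z ∈ segment ℝ x y, ⟪z, u⟫ = r := by
  have hcont : ContinuousOn (fun θ : ℝ => (⟪x + θ • (y - x), u⟫ : ℝ)) (Set.Icc 0 1) := by
    apply Continuous.continuousOn
    exact Continuous.inner (by continuity) continuous_const
  have hr : r ∈ Set.Icc (⟪x + (0:ℝ) • (y - x), u⟫ : ℝ) (⟪x + (1:ℝ) • (y - x), u⟫ : ℝ) := by
    simp only [zero_smul, add_zero, one_smul, add_sub_cancel]
    exact ⟨hx, hy⟩
  obtain ⟨θ, hθ, hθr⟩ := intermediate_value_Icc zero_le_one hcont hr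
  exact ⟨x + θ • (y - x), by rw [segment_eq_image']; exact ⟨θ, hθ, rfl⟩, hθr⟩

lemma hits_mono {K L : Set E} (h : K ⊆ L) : hits K ⊆ hits L := by
  rintro p ⟨x, hx, hxp⟩; exact ⟨x, h hx, hxp⟩

lemma sepPts_subset_hits (x y : E) : sepPts x y ⊆ hits (segment ℝ x y) := by
  rintro ⟨u, r⟩ hp
  have hp' : ((⟪x, (u:E)⟫ : ℝ) - r) * (⟪y, (u:E)⟫ - r) < 0 := hp
  rcases mul_neg_iff.mp hp' with ⟨h1, h2⟩ | ⟨h1, h2⟩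
  · obtain ⟨z, hz, hzr⟩ := seg_hit (le_of_lt (by linarith : (⟪y, (u:E)⟫:ℝ) < r))
      (le_of_lt (by linarith : r < (⟪x, (u:E)⟫:ℝ)))
    exact ⟨z, (segment_symm ℝ y x ▸ hz), hzr⟩
  · obtain ⟨z, hz, hzr⟩ := seg_hit (le_of_lt (by linarith : (⟪x, (u:E)⟫:ℝ) < r))
      (le_of_lt (by linarith : r < (⟪y, (u:E)⟫:ℝ)))
    exact ⟨z, hz, hzr⟩

lemma sepSets_subset_hits {A B : Set E} (hAne : A.Nonempty) (hBne : B.Nonempty) :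
    sepSets A B ⊆ hits (convexHull ℝ (A ∪ B)) := by
  obtain ⟨a, ha⟩ := hAne; obtain ⟨b, hb⟩ := hBne
  rintro ⟨u, r⟩ hp
  have hseg : segment ℝ a b ⊆ convexHull ℝ (A ∪ B) :=
    (segment_subset_convexHull (Or.inl ha) (Or.inr hb))
  rcases hp with ⟨h1, h2⟩ | ⟨h1, h2⟩
  · obtain ⟨z, hz, hzr⟩ := seg_hit (le_of_lt (h1 a ha)) (le_of_lt (h2 b hb))
    exact ⟨z, hseg hz, hzr⟩
  · obtain ⟨z, hz, hzr⟩ := seg_hit (le_of_lt (h1 b hb)) (le_of_lt (h2 a ha))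
    exact ⟨z, hseg (segment_symm ℝ b a ▸ hz), hzr⟩

lemma const_sign {P : Set E} (hP : Convex ℝ P) {u : Metric.sphere (0:E) 1} {r : ℝ}
    (hno : (⟨u, r⟩ : HypSp d) ∉ hits P) :
    (∀ x ∈ P, ⟪x, (u:E)⟫ < r) ∨ (∀ x ∈ P, r < ⟪x, (u:E)⟫) := by
  by_contra hcon
  push_neg at hcon
  obtain ⟨⟨x, hx, hxr⟩, ⟨y, hy, hyr⟩⟩ := hcon
  obtain ⟨z, hz, hzr⟩ := seg_hit hyr hxr
  exact hno ⟨z, hP.segment_subset hy hx hz, hzr⟩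

lemma hits_hull_subset {A B P Q : Set E} (hAP : A ⊆ P) (hBQ : B ⊆ Q)
    (hP : Convex ℝ P) (hQ : Convex ℝ Q) :
    hits (convexHull ℝ (A ∪ B)) ⊆ sepSets A B ∪ hits P ∪ hits Q := by
  rintro ⟨u, r⟩ hp
  by_cases hPhit : (⟨u, r⟩ : HypSp d) ∈ hits P
  · exact Or.inl (Or.inr hPhit)
  by_cases hQhit : (⟨u, r⟩ : HypSp d) ∈ hits Q
  · exact Or.inr hQhit
  left; left
  have hlin : IsLinearMap ℝ (fun x : E => (⟪x, (u:E)⟫ : ℝ)) :=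
    ⟨fun a b => inner_add_left a b _, fun c a => real_inner_smul_left a _ c⟩
  have hsP := const_sign hP hPhit
  have hsQ := const_sign hQ hQhit
  obtain ⟨z, hz, hzr⟩ := hp
  rcases hsP with hsP | hsP <;> rcases hsQ with hsQ | hsQ
  · exfalso
    have hsub : A ∪ B ⊆ {x : E | (⟪x, (u:E)⟫ : ℝ) < r} := by
      rintro x (hx | hx)
      · exact hsP x (hAP hx)
      · exact hsQ x (hBQ hx)
    have := convexHull_min hsub (convex_halfSpace_lt hlin r) hz
    simp only [Set.mem_setOf_eq] at this; linarith
  · exact Or.inl ⟨fun a ha => hsP a (hAP ha), fun b hb => hsQ b (hBQ hb)⟩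
  · exact Or.inr ⟨fun b hb => hsQ b (hBQ hb), fun a ha => hsP a (hAP ha)⟩
  · exfalso
    have hsub : A ∪ B ⊆ {x : E | r < (⟪x, (u:E)⟫ : ℝ)} := by
      rintro x (hx | hx)
      · exact hsP x (hAP hx)
      · exact hsQ x (hBQ hx)
    have := convexHull_min hsub (convex_halfSpace_gt hlin r) hz
    simp only [Set.mem_setOf_eq] at this; linarith

lemma hits_image_add (h : E) (K : Set E) :
    hits ((· + h) '' K) = hypTrans (-h) ⁻¹' hits K := by
  ext ⟨u, r⟩
  constructor
  · rintro ⟨z, ⟨x, hx, rfl⟩, hz⟩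
    refine ⟨x, hx, ?_⟩
    show (⟪x, (u:E)⟫ : ℝ) = r + ⟪-h, (u:E)⟫
    rw [inner_add_left] at hz
    rw [inner_neg_left]; linarith
  · rintro ⟨x, hx, hz⟩
    have hz' : (⟪x, (u:E)⟫ : ℝ) = r + ⟪-h, (u:E)⟫ := hz
    refine ⟨x + h, ⟨x, hx, rfl⟩, ?_⟩
    show (⟪x + h, (u:E)⟫ : ℝ) = r
    rw [inner_neg_left] at hz'
    rw [inner_add_left]; linarith

lemma sepPts_translate (x y v : E) :
    sepPts (x + v) (y + v) = hypTrans (-v) ⁻¹' sepPts x y := by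
  ext ⟨u, r⟩
  show (⟪x + v, (u:E)⟫ - r) * (⟪y + v, (u:E)⟫ - r) < 0 ↔
    (⟪x, (u:E)⟫ - (r + ⟪-v, (u:E)⟫)) * (⟪y, (u:E)⟫ - (r + ⟪-v, (u:E)⟫)) < 0
  rw [inner_add_left, inner_add_left, inner_neg_left]
  constructor <;> intro hlt <;> nlinarith [hlt]

lemma hypTrans_continuous (h : E) : Continuous (hypTrans h) :=
  continuous_fst.prodMk (continuous_snd.add (cont_ip h))

lemma measure_preimage_hypTrans (Λ : Measure (HypSp d)) (hinv : TransInvariant Λ)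
    (g : E) {S : Set (HypSp d)} (hS : MeasurableSet S) :
    Λ (hypTrans g ⁻¹' S) = Λ S := by
  conv_rhs => rw [← hinv g]
  rw [Measure.map_apply (hypTrans_continuous g).measurable hS]

lemma isClosed_hits {K : Set E} (hK : IsCompact K) : IsClosed (hits K) := by
  have heq : hits K = Prod.snd '' {q : K × HypSp d | (⟪(q.1 : E), (q.2.1 : E)⟫ : ℝ) = q.2.2} := by
    ext p; constructor
    · rintro ⟨x, hx, hxp⟩; exact ⟨(⟨x, hx⟩, p), hxp, rfl⟩
    · rintro ⟨⟨x, q⟩, hq, rfl⟩; exact ⟨x, x.2, hq⟩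
  rw [heq]
  have : CompactSpace K := isCompact_iff_compactSpace.mp hK
  apply isClosedMap_snd_of_compactSpace
  apply isClosed_eq
  · exact Continuous.inner (continuous_subtype_val.comp continuous_fst)
      (continuous_subtype_val.comp (continuous_fst.comp continuous_snd))
  · exact continuous_snd.comp continuous_snd

lemma isOpen_sepPts (x y : E) : IsOpen (sepPts x y) := by
  have heq : sepPts x y =
      (fun p : HypSp d => (⟪x, (p.1:E)⟫ - p.2) * (⟪y, (p.1:E)⟫ - p.2)) ⁻¹' Set.Iio 0 := rfl
  rw [heq]
  exact (((cont_ip x).sub continuous_snd).mul ((cont_ip y).sub continuous_snd)).isOpen_preimage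
    _ isOpen_Iio

lemma interval_step {s r t : ℝ} {k : ℕ} (hkt : (k:ℝ) + 1 ≤ t)
    (h : ((k:ℝ) * s - r) * (((k:ℝ) + 1) * s - r) < 0) :
    (0 - r) * (t * s - r) < 0 := by
  have hk0 : (0:ℝ) ≤ (k:ℝ) := Nat.cast_nonneg k
  rcases mul_neg_iff.mp h with ⟨h1, h2⟩ | ⟨h1, h2⟩
  · have hs : s < 0 := by nlinarith
    apply mul_neg_of_pos_of_neg
    · nlinarith
    · nlinarith [mul_nonneg (by linarith : (0:ℝ) ≤ t - ((k:ℝ) + 1)) (by linarith : (0:ℝ) ≤ -s)]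
  · have hs : 0 < s := by nlinarith
    apply mul_neg_of_neg_of_pos
    · nlinarith
    · nlinarith [mul_nonneg (by linarith : (0:ℝ) ≤ t - ((k:ℝ) + 1)) hs.le]

lemma interval_disj {s r : ℝ} {j k : ℕ} (hjk : j < k)
    (hj : ((j:ℝ) * s - r) * (((j:ℝ) + 1) * s - r) < 0)
    (hk : ((k:ℝ) * s - r) * (((k:ℝ) + 1) * s - r) < 0) : False := by
  have hjk' : (j:ℝ) + 1 ≤ (k:ℝ) := by exact_mod_cast Nat.succ_le_of_lt hjk
  rcases mul_neg_iff.mp hj with ⟨a1, a2⟩ | ⟨a1, a2⟩ <;>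
    rcases mul_neg_iff.mp hk with ⟨b1, b2⟩ | ⟨b1, b2⟩
  · have hs : s < 0 := by nlinarith
    nlinarith [mul_nonneg (by linarith : (0:ℝ) ≤ (k:ℝ) - ((j:ℝ) + 1)) (by linarith : (0:ℝ) ≤ -s)]
  · have hs1 : s < 0 := by nlinarith
    have hs2 : 0 < s := by nlinarith
    linarith
  · have hs1 : 0 < s := by nlinarith
    have hs2 : s < 0 := by nlinarith
    linarith
  · have hs : 0 < s := by nlinarith
    nlinarith [mul_nonneg (by linarith : (0:ℝ) ≤ (k:ℝ) - ((j:ℝ) + 1)) hs.le]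

lemma mem_sepPts_step {u : E} {k : ℝ} {p : HypSp d} :
    p ∈ hypTrans (-(k • u)) ⁻¹' sepPts 0 u ↔
      (k * ⟪u, (p.1:E)⟫ - p.2) * ((k + 1) * ⟪u, (p.1:E)⟫ - p.2) < 0 := by
  obtain ⟨u', r⟩ := p
  show ((⟪(0:E), (u':E)⟫ : ℝ) - (r + ⟪-(k • u), (u':E)⟫)) *
      (⟪u, (u':E)⟫ - (r + ⟪-(k • u), (u':E)⟫)) < 0 ↔ _
  rw [inner_zero_left, inner_neg_left, real_inner_smul_left]
  constructor <;> intro hh <;> nlinarith [hh]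

lemma stack {Λ : Measure (HypSp d)} (hinv : TransInvariant Λ) (u : E)
    (n : ℕ) {t : ℝ} (hnt : (n:ℝ) ≤ t) :
    (n : ℝ≥0∞) * Λ (sepPts 0 u) ≤ Λ (sepPts 0 (t • u)) := by
  set S : ℕ → Set (HypSp d) := fun k => hypTrans (-((k:ℝ) • u)) ⁻¹' sepPts 0 u with hS
  have hSm : ∀ k, MeasurableSet (S k) := fun k =>
    ((isOpen_sepPts 0 u).measurableSet).preimage (hypTrans_continuous _).measurable
  have hSmeas : ∀ k, Λ (S k) = Λ (sepPts 0 u) := fun k =>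
    measure_preimage_hypTrans Λ hinv _ (isOpen_sepPts 0 u).measurableSet
  have hsub : ∀ k ∈ Finset.range n, S k ⊆ sepPts 0 (t • u) := by
    intro k hk p hp
    rw [hS, mem_sepPts_step] at hp
    have hkt : (k:ℝ) + 1 ≤ t := by
      have h1 : (k:ℝ) + 1 ≤ (n:ℝ) := by
        exact_mod_cast Nat.succ_le_of_lt (Finset.mem_range.mp hk)
      linarith
    have hstep := interval_step hkt hp
    show ((⟪(0:E), (p.1:E)⟫ : ℝ) - p.2) * (⟪t • u, (p.1:E)⟫ - p.2) < 0
    rw [inner_zero_left, real_inner_smul_left]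
    exact hstep
  have hdisj : (↑(Finset.range n) : Set ℕ).PairwiseDisjoint S := by
    intro j _ k _ hne
    refine Set.disjoint_left.mpr fun p hpj hpk => ?_
    rw [hS, mem_sepPts_step] at hpj hpk
    rcases Nat.lt_or_ge j k with hlt | hge
    · exact interval_disj hlt hpj hpk
    · exact interval_disj (lt_of_le_of_ne hge (Ne.symm hne)) hpk hpj
  calc (n : ℝ≥0∞) * Λ (sepPts 0 u) = ∑ k ∈ Finset.range n, Λ (S k) := by
        rw [Finset.sum_congr rfl (fun k _ => hSmeas k), Finset.sum_const, Finset.card_range,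
          nsmul_eq_mul]
    _ = Λ (⋃ k ∈ Finset.range n, S k) :=
        (measure_biUnion_finset hdisj (fun k _ => hSm k)).symm
    _ ≤ Λ (sepPts 0 (t • u)) := measure_mono (Set.iUnion₂_subset hsub)

end Aux

/-- Under the same hypotheses as Statement 10,
`Λ([A | T_h B]) / Λ([conv(A ∪ T_h B)]) → 1` as `‖h‖ → ∞`. -/
theorem stmt11 {d : ℕ} (Λ : Measure (HypSp d))
    (hinv : TransInvariant Λ) (hfin : LocFiniteHyp Λ)
    (A B : Set (EuclideanSpace ℝ (Fin d))) (hA : IsCompact A) (hB : IsCompact B)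
    (hAne : A.Nonempty) (hBne : B.Nonempty)
    (κ : ℝ) (hκpos : 0 < κ)
    (hκ : ∀ u : EuclideanSpace ℝ (Fin d), ‖u‖ = 1 → κ ≤ (Λ (sepPts 0 u)).toReal) :
    Tendsto (fun h : EuclideanSpace ℝ (Fin d) =>
        (Λ (sepSets A ((· + h) '' B))).toReal
          / (Λ (hits (convexHull ℝ (A ∪ (· + h) '' B)))).toReal)
      (Bornology.cobounded (EuclideanSpace ℝ (Fin d))) (𝓝 1) := by
  classical
  obtain ⟨a, ha⟩ := hAne
  obtain ⟨b, hb⟩ := hBne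
  obtain ⟨RA, hRA⟩ := hA.isBounded.subset_closedBall 0
  obtain ⟨RB, hRB⟩ := hB.isBounded.subset_closedBall 0
  have hRA0 : 0 ≤ RA := le_trans dist_nonneg (Metric.mem_closedBall.mp (hRA ha))
  have hRB0 : 0 ≤ RB := le_trans dist_nonneg (Metric.mem_closedBall.mp (hRB hb))
  set CA := Λ (hits (Metric.closedBall (0 : EuclideanSpace ℝ (Fin d)) RA)) with hCAdef
  set CB := Λ (hits (Metric.closedBall (0 : EuclideanSpace ℝ (Fin d)) RB)) with hCBdef
  have hCAfin : CA ≠ ⊤ := hfin _ (isCompact_closedBall _ _)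
  have hCBfin : CB ≠ ⊤ := hfin _ (isCompact_closedBall _ _)
  set C : ℝ := CA.toReal + CB.toReal with hCdef
  have hC0 : 0 ≤ C := add_nonneg ENNReal.toReal_nonneg ENNReal.toReal_nonneg
  set M : ℝ := ‖a‖ + ‖b‖ + 2 with hMdef
  have key : ∀ h : EuclideanSpace ℝ (Fin d), M ≤ ‖h‖ →
      |(Λ (sepSets A ((· + h) '' B))).toReal
          / (Λ (hits (convexHull ℝ (A ∪ (· + h) '' B)))).toReal - 1|
        ≤ C / (κ * (‖h‖ - M + 1)) := by
    intro h hM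
    set Bh := (· + h) '' B with hBhdef
    have hBhne : Bh.Nonempty := ⟨b + h, ⟨b, hb, rfl⟩⟩
    set W := convexHull ℝ (A ∪ Bh) with hWdef
    set D := Λ (hits W) with hDdef
    set N := Λ (sepSets A Bh) with hNdef
    -- D is finite
    have hWsub : W ⊆ Metric.closedBall (0 : EuclideanSpace ℝ (Fin d)) (RA + (RB + ‖h‖)) := by
      apply convexHull_min _ (convex_closedBall _ _)
      rintro x (hx | ⟨y, hy, rfl⟩)
      · have hx' := Metric.mem_closedBall.mp (hRA hx)
        rw [Metric.mem_closedBall]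
        have : (0:ℝ) ≤ RB + ‖h‖ := add_nonneg hRB0 (norm_nonneg h)
        linarith
      · have hy' := Metric.mem_closedBall.mp (hRB hy)
        rw [Metric.mem_closedBall, dist_zero_right]
        rw [dist_zero_right] at hy'
        calc ‖y + h‖ ≤ ‖y‖ + ‖h‖ := norm_add_le _ _
          _ ≤ RA + (RB + ‖h‖) := by linarith
    have hDfin : D ≠ ⊤ :=
      ne_top_of_le_ne_top (hfin _ (isCompact_closedBall _ _))
        (measure_mono (hits_mono hWsub))
    -- N ≤ D
    have hND : N ≤ D := measure_mono (sepSets_subset_hits ⟨a, ha⟩ hBhne)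
    have hNfin : N ≠ ⊤ := ne_top_of_le_ne_top hDfin hND
    -- upper bound D ≤ N + CA + CB
    have hball : (· + h) '' Metric.closedBall (0 : EuclideanSpace ℝ (Fin d)) RB
        = Metric.closedBall h RB := by
      ext x
      constructor
      · rintro ⟨y, hy, rfl⟩
        rw [Metric.mem_closedBall, dist_zero_right] at hy
        rw [Metric.mem_closedBall, dist_eq_norm]
        simpa using hy
      · intro hx
        rw [Metric.mem_closedBall, dist_eq_norm] at hx
        exact ⟨x - h, by rw [Metric.mem_closedBall, dist_zero_right]; exact hx,
          sub_add_cancel x h⟩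
    have hCBh : Λ (hits (Metric.closedBall h RB)) = CB := by
      rw [← hball, hits_image_add]
      exact measure_preimage_hypTrans Λ hinv _
        (isClosed_hits (isCompact_closedBall _ _)).measurableSet
    have hupper : D ≤ N + CA + CB := by
      have hsub2 : hits W ⊆ sepSets A Bh
          ∪ hits (Metric.closedBall (0 : EuclideanSpace ℝ (Fin d)) RA)
          ∪ hits (Metric.closedBall h RB) := by
        apply hits_hull_subset hRA _ (convex_closedBall _ _) (convex_closedBall _ _)
        rintro x ⟨y, hy, rfl⟩
        have hy' := Metric.mem_closedBall.mp (hRB hy)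
        rw [dist_zero_right] at hy'
        rw [Metric.mem_closedBall, dist_eq_norm]
        simpa using hy'
      calc D ≤ Λ (sepSets A Bh
            ∪ hits (Metric.closedBall (0 : EuclideanSpace ℝ (Fin d)) RA)
            ∪ hits (Metric.closedBall h RB)) := measure_mono hsub2
        _ ≤ N + CA + Λ (hits (Metric.closedBall h RB)) :=
            le_trans (measure_union_le _ _) (add_le_add (measure_union_le _ _) le_rfl)
        _ = N + CA + CB := by rw [hCBh]
    -- lower bound
    set v := b + h - a with hvdef
    have htri : ‖h‖ ≤ ‖v‖ + (‖a‖ + ‖b‖) := by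
      have h1 : h = v + (a - b) := by rw [hvdef]; abel
      calc ‖h‖ = ‖v + (a - b)‖ := by rw [← h1]
        _ ≤ ‖v‖ + ‖a - b‖ := norm_add_le _ _
        _ ≤ ‖v‖ + (‖a‖ + ‖b‖) := by linarith [norm_sub_le a b]
    have hvnorm : ‖h‖ - M + 2 ≤ ‖v‖ := by rw [hMdef]; linarith
    have hv2 : (2:ℝ) ≤ ‖v‖ := by linarith
    have hv0 : v ≠ 0 := by
      intro h0; rw [h0, norm_zero] at hv2; linarith
    set u := ‖v‖⁻¹ • v with hudef
    have hu1 : ‖u‖ = 1 := norm_smul_inv_norm hv0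
    have hvu : ‖v‖ • u = v := smul_inv_smul₀ (norm_ne_zero_iff.mpr hv0) v
    set n := ⌊‖v‖⌋₊ with hndef
    have hnle : (n:ℝ) ≤ ‖v‖ := Nat.floor_le (norm_nonneg v)
    have hnge : ‖v‖ - 1 ≤ (n:ℝ) := by
      have := Nat.lt_floor_add_one ‖v‖
      linarith
    have hlow : (n : ℝ≥0∞) * Λ (sepPts 0 u) ≤ D := by
      have h1 : (n : ℝ≥0∞) * Λ (sepPts 0 u) ≤ Λ (sepPts 0 v) := by
        have := stack hinv u n hnle
        rwa [hvu] at this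
      have h2 : Λ (sepPts 0 v) = Λ (sepPts a (b + h)) := by
        have he : sepPts a (b + h) = hypTrans (-a) ⁻¹' sepPts 0 v := by
          have := sepPts_translate 0 v a
          rwa [zero_add, hvdef, sub_add_cancel] at this
        rw [he, measure_preimage_hypTrans Λ hinv _ (isOpen_sepPts 0 v).measurableSet]
      have h3 : Λ (sepPts a (b + h)) ≤ D := by
        apply measure_mono
        refine subset_trans (sepPts_subset_hits a (b + h)) (hits_mono ?_)
        exact segment_subset_convexHull (Or.inl ha) (Or.inr ⟨b, hb, rfl⟩)
      exact le_trans h1 (le_trans (le_of_eq h2) h3)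
    have hκ' : ENNReal.ofReal κ ≤ Λ (sepPts 0 u) :=
      ENNReal.ofReal_le_of_le_toReal (hκ u hu1)
    have hDr : (n:ℝ) * κ ≤ D.toReal := by
      have hle : (n : ℝ≥0∞) * ENNReal.ofReal κ ≤ D :=
        le_trans (mul_le_mul_right hκ' _) hlow
      have := ENNReal.toReal_mono hDfin hle
      rw [ENNReal.toReal_mul] at this
      simpa [ENNReal.toReal_ofReal hκpos.le] using this
    have hDge : κ * (‖h‖ - M + 1) ≤ D.toReal := by nlinarith
    have hDpos : 0 < D.toReal := lt_of_lt_of_le (by nlinarith) hDge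
    -- real comparisons
    have hND' : N.toReal ≤ D.toReal := ENNReal.toReal_mono hDfin hND
    have hupper' : D.toReal ≤ N.toReal + C := by
      have hfin2 : N + CA + CB ≠ ⊤ := by
        simp [ENNReal.add_ne_top, hNfin, hCAfin, hCBfin]
      have := ENNReal.toReal_mono hfin2 hupper
      rw [ENNReal.toReal_add (ENNReal.add_ne_top.mpr ⟨hNfin, hCAfin⟩) hCBfin,
        ENNReal.toReal_add hNfin hCAfin] at this
      rw [hCdef]
      linarith
    have hle1 : N.toReal / D.toReal ≤ 1 := (div_le_one hDpos).mpr hND'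
    rw [abs_of_nonpos (by linarith)]
    have e1 : -(N.toReal / D.toReal - 1) = (D.toReal - N.toReal) / D.toReal := by
      field_simp
      ring
    rw [e1]
    have e2 : (D.toReal - N.toReal) / D.toReal ≤ C / (κ * (‖h‖ - M + 1)) := by
      gcongr
      · nlinarith
    exact e2
  -- conclusion by squeezing
  have hg : Tendsto (fun h : EuclideanSpace ℝ (Fin d) => C / (κ * (‖h‖ - M + 1)))
      (Bornology.cobounded (EuclideanSpace ℝ (Fin d))) (𝓝 0) := by
    have h1 : Tendsto (fun x : ℝ => C / (κ * (x - M + 1))) atTop (𝓝 0) := by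
      apply Tendsto.div_atTop tendsto_const_nhds
      apply Tendsto.const_mul_atTop hκpos
      have : Tendsto (fun x : ℝ => x - M + 1) atTop atTop := by
        apply tendsto_atTop_add_const_right
        exact tendsto_atTop_add_const_right _ _ tendsto_id
      simpa [sub_eq_add_neg] using this
    exact h1.comp tendsto_norm_cobounded_atTop
  rw [tendsto_iff_dist_tendsto_zero]
  simp only [Real.dist_eq]
  apply squeeze_zero' (Eventually.of_forall fun h => abs_nonneg _) _ hg
  exact (tendsto_norm_cobounded_atTop.eventually (eventually_ge_atTop M)).mono key
end
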